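/- Let A be an abelian category and I a set of monomorphisms in A that admits the small object argument. Then (Cok I)^⊥1 = (Cell(I))^⊥1 = (Filt-Cok I)^⊥1. -/

import Mathlib

open CategoryTheory CategoryTheory.Limits

universe w v u

namespace CellComplex

variable {C : Type u} [Category.{v} C]

/-- The inclusion of `Set.Iio g` into `Set.Iio l` for `g ≤ l`, as a functor. -/
def iioFunctor {g l : Ordinal.{w}} (h : g ≤ l) : Set.Iio g ⥤ Set.Iio l :=
  Monotone.functor (f := fun a => (⟨a.1, lt_of_lt_of_le a.2 h⟩ : Set.Iio l))
    (fun _ _ hab => hab)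

/-- For `g < l`, the canonical cocone over the restriction of `X : Set.Iio l ⥤ C` to
`Set.Iio g` whose point is `X.obj ⟨g, _⟩`. -/
def coconeAt {l : Ordinal.{w}} (X : Set.Iio l ⥤ C) {g : Ordinal.{w}} (h : g < l) :
    Cocone (iioFunctor h.le ⋙ X) where
  pt := X.obj ⟨g, h⟩
  ι :=
    { app := fun a => X.map (homOfLE (le_of_lt a.2))
      naturality := fun a b f => by
        dsimp [iioFunctor, Monotone.functor]
        rw [Category.comp_id, ← X.map_comp]
        congr 1 }

/-- A functor `X : Set.Iio l ⥤ C` is a `λ`-sequence if for every limit ordinal `g < l`,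
the object `X.obj g` together with the canonical maps is a colimit of the restriction of
`X` to `Set.Iio g`. -/
def IsLambdaSequence {l : Ordinal.{w}} (X : Set.Iio l ⥤ C) : Prop :=
  ∀ (g : Ordinal.{w}) (h : g < l), Order.IsSuccLimit g → Nonempty (IsColimit (coconeAt X h))

/-- The canonical morphism in the preorder category `Set.Iio l` from `a` to `a + 1`. -/
def toSucc {l : Ordinal.{w}} (a : Ordinal.{w}) (ha : a + 1 < l) :
    (⟨a, (lt_add_one a).trans ha⟩ : Set.Iio l) ⟶ (⟨a + 1, ha⟩ : Set.Iio l) :=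
  homOfLE (le_of_lt (lt_add_one a))

/-- All the successor maps of the sequence `X` satisfy the property `P`. -/
def SuccMapsIn (P : MorphismProperty C) {l : Ordinal.{w}} (X : Set.Iio l ⥤ C) : Prop :=
  ∀ (a : Ordinal.{w}) (ha : a + 1 < l), P (X.map (toSucc a ha))

/-- `f : A ⟶ B` is a transfinite composition of a `λ`-sequence whose successor maps
satisfy `P`: there is such a sequence starting (up to isomorphism) at `A`, having a
colimit cocone whose point is isomorphic to `B` compatibly with `f`. -/
def IsTransCompOf (P : MorphismProperty C) {A B : C} (f : A ⟶ B) : Prop :=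
  ∃ (l : Ordinal.{w}) (hl : 0 < l) (X : Set.Iio l ⥤ C),
    IsLambdaSequence X ∧ SuccMapsIn P X ∧
      ∃ (c : Cocone X) (_ : IsColimit c) (e₀ : A ≅ X.obj ⟨0, hl⟩) (e₁ : c.pt ≅ B),
        f = e₀.hom ≫ c.ι.app ⟨0, hl⟩ ≫ e₁.hom

/-- `f` is a pushout of some morphism satisfying `I`, i.e. `f` is the parallel side of a
pushout square whose other side is a morphism of `I`. -/
def IsPushoutOfIn (I : MorphismProperty C) {X Y : C} (f : X ⟶ Y) : Prop :=
  ∃ (A B : C) (d : A ⟶ B) (g : A ⟶ X) (h : B ⟶ Y), I d ∧ IsPushout d g h f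

/-- The class of pushouts of morphisms in `I`. -/
def pushouts (I : MorphismProperty C) : MorphismProperty C :=
  fun _ _ f => IsPushoutOfIn I f

/-- Transfinite compositions of pushouts of morphisms in `I` exist: pushouts of
morphisms of `I` along arbitrary morphisms exist, and every `λ`-sequence whose successor
maps are pushouts of morphisms of `I` has a colimit. -/
def HasTransfiniteCompositionsOfPushouts (I : MorphismProperty C) : Prop :=
  (∀ ⦃A B : C⦄ (d : A ⟶ B), I d → ∀ ⦃X : C⦄ (g : A ⟶ X),
      ∃ (Y : C) (h : B ⟶ Y) (f : X ⟶ Y), IsPushout d g h f) ∧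
    (∀ (l : Ordinal.{w}) (X : Set.Iio l ⥤ C), IsLambdaSequence X →
      SuccMapsIn (pushouts I) X → HasColimit X)

/-- The class `I`-cell of relative `I`-cell complexes: transfinite compositions of
pushouts of morphisms of `I`. -/
def cell (I : MorphismProperty C) : MorphismProperty C :=
  fun _ _ f => IsTransCompOf.{w} (pushouts I) f

/-- The class `I`-inj of morphisms having the right lifting property with respect to
every morphism of `I`. -/
def inj (I : MorphismProperty C) : MorphismProperty C :=
  fun _ _ p => ∀ ⦃A B : C⦄ (i : A ⟶ B), I i → HasLiftingProperty i p

/-- The class `I`-cof of morphisms having the left lifting property with respect to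
every morphism of `I`-inj. -/
def cof (I : MorphismProperty C) : MorphismProperty C :=
  fun _ _ i => ∀ ⦃X Y : C⦄ (p : X ⟶ Y), inj I p → HasLiftingProperty i p

/-- Coproducts of set-indexed families of morphisms in `I` exist: for every set-indexed
family of morphisms of `I`, the coproducts of the domains and of the codomains exist. -/
def HasCoproductsOfMorphisms (I : MorphismProperty C) : Prop :=
  ∀ (S : Type w) (A B : S → C) (i : ∀ s, A s ⟶ B s), (∀ s, I (i s)) →
    HasCoproduct A ∧ HasCoproduct B

/-- An object `A` is `κ`-small relative to a class `D` of morphisms: for every ordinal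
`l` of cofinality `> κ` and every `λ`-sequence with successor maps in `D` admitting a
colimit, the canonical map `colimᵢ Hom(A, Xᵢ) ⟶ Hom(A, colimᵢ Xᵢ)` is bijective, i.e.
every morphism from `A` to the colimit factors through some stage, and any two morphisms
to a stage which agree in the colimit agree at some later stage. -/
def IsSmallRelativeTo (κ : Cardinal.{w}) (D : MorphismProperty C) (A : C) : Prop :=
  ∀ (l : Ordinal.{w}), κ < l.cof → ∀ (X : Set.Iio l ⥤ C), IsLambdaSequence X →
    SuccMapsIn D X → ∀ (c : Cocone X), IsColimit c →
      ((∀ u : A ⟶ c.pt, ∃ (a : Set.Iio l) (v : A ⟶ X.obj a), v ≫ c.ι.app a = u) ∧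
        (∀ (a : Set.Iio l) (v₁ v₂ : A ⟶ X.obj a), v₁ ≫ c.ι.app a = v₂ ≫ c.ι.app a →
          ∃ (b : Set.Iio l) (hab : a ≤ b),
            v₁ ≫ X.map (homOfLE hab) = v₂ ≫ X.map (homOfLE hab)))

/-- The set `I` of morphisms admits the small object argument: (i) transfinite
compositions of pushouts of morphisms in `I` exist, (ii) coproducts of set-indexed
families of morphisms in `I` exist, and (iii) the domains of the morphisms of `I` are
small relative to `I`-cell. -/
def AdmitsSmallObjectArgument (I : MorphismProperty C) : Prop :=
  HasTransfiniteCompositionsOfPushouts.{w} I ∧ HasCoproductsOfMorphisms.{w} I ∧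
    ∀ ⦃A B : C⦄ (i : A ⟶ B), I i →
      ∃ κ : Cardinal.{w}, IsSmallRelativeTo κ (cell.{w} I) A

section AbelianComplete

open ZeroObject

variable {C : Type u} [Category.{v} C] [Abelian C]

/-- `0 → A → B → C' → 0` is a short exact sequence. -/
def IsShortExact {A B C' : C} (f : A ⟶ B) (g : B ⟶ C') : Prop :=
  ∃ w : f ≫ g = 0, (ShortComplex.mk f g w).ShortExact

/-- `Ext¹(X, A) = 0`, expressed by the vanishing of the Yoneda Ext group: every short
exact sequence `0 → A → E → X → 0` splits. -/
def Ext1Zero (X A : C) : Prop :=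
  ∀ ⦃E : C⦄ (f : A ⟶ E) (g : E ⟶ X), IsShortExact f g → ∃ s : X ⟶ E, s ≫ g = 𝟙 X

/-- The right `Ext¹`-orthogonal `S^⊥₁` of a class of objects `S`. -/
def rightPerp (S : Set C) : Set C := {Y | ∀ X ∈ S, Ext1Zero X Y}

/-- The left `Ext¹`-orthogonal `⊥₁S` of a class of objects `S`. -/
def leftPerp (S : Set C) : Set C := {X | ∀ Y ∈ S, Ext1Zero X Y}

/-- The class of monomorphisms whose cokernel is isomorphic to an object of `S`. -/
def monoWithCokerIn (S : Set C) : MorphismProperty C :=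
  fun _ _ f => Mono f ∧ ∃ W ∈ S, Nonempty (cokernel f ≅ W)

/-- `B` is `S`-filtered: `0 → B` is the transfinite composition of a `λ`-sequence
starting at `0` whose successor maps are monomorphisms with cokernel isomorphic to an
object of `S`. -/
def IsSFiltered (S : Set C) (B : C) : Prop :=
  ∃ (l : Ordinal.{w}) (hl : 0 < l) (X : Set.Iio l ⥤ C),
    IsLambdaSequence X ∧ SuccMapsIn (monoWithCokerIn S) X ∧ IsZero (X.obj ⟨0, hl⟩) ∧
      ∃ (c : Cocone X) (_ : IsColimit c), Nonempty (c.pt ≅ B)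

/-- `Cell(I)`: the objects `A` such that `0 ⟶ A` is a relative `I`-cell complex. -/
def CellObjects (I : MorphismProperty C) : Set C :=
  {A | cell.{w} I (0 : (0 : C) ⟶ A)}

/-- `Cok I`: the objects isomorphic to the cokernel of some morphism of `I`. -/
def CokObjects (I : MorphismProperty C) : Set C :=
  {A | ∃ (X Y : C) (i : X ⟶ Y), I i ∧ Nonempty (A ≅ cokernel i)}

/-- `I` is homological: whenever `A ⟶ 0` lies in `I`-inj, `A ∈ (Cok I)^⊥₁`. -/
def IsHomological (I : MorphismProperty C) : Prop :=
  ∀ A : C, inj I (0 : A ⟶ (0 : C)) → A ∈ rightPerp (CokObjects I)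

/-- `(𝒳, 𝒴)` is a cotorsion pair: `𝒳 = ⊥₁𝒴` and `𝒴 = 𝒳^⊥₁`. -/
def IsCotorsionPair (𝒳 𝒴 : Set C) : Prop :=
  𝒳 = leftPerp 𝒴 ∧ 𝒴 = rightPerp 𝒳

/-- The cotorsion pair `(𝒳, 𝒴)` is complete: it is a cotorsion pair with enough
projectives and enough injectives. -/
def IsCompleteCotorsionPair (𝒳 𝒴 : Set C) : Prop :=
  IsCotorsionPair 𝒳 𝒴 ∧
    (∀ A : C, ∃ (Y₀ X₀ : C) (f : Y₀ ⟶ X₀) (g : X₀ ⟶ A),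
      IsShortExact f g ∧ X₀ ∈ 𝒳 ∧ Y₀ ∈ 𝒴) ∧
    (∀ A : C, ∃ (Y₀ X₀ : C) (f : A ⟶ Y₀) (g : Y₀ ⟶ X₀),
      IsShortExact f g ∧ X₀ ∈ 𝒳 ∧ Y₀ ∈ 𝒴)

/-- `T` is a class of generators: every object admits an epimorphism from a coproduct of
a set-indexed family of objects of `T`. -/
def IsGeneratingClass (T : Set C) : Prop :=
  ∀ A : C, ∃ (S : Type w) (G : S → C) (_ : ∀ s, G s ∈ T)
    (c : Cofan G) (_ : IsColimit c) (p : c.pt ⟶ A), Epi p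

/-- `T` is closed under (set-indexed) coproducts: coproducts of families of objects of
`T` exist and belong to `T`. -/
def ClosedUnderCoproducts (T : Set C) : Prop :=
  ∀ (S : Type w) (A : S → C), (∀ s, A s ∈ T) →
    ∃ (c : Cofan A) (_ : IsColimit c), c.pt ∈ T

/-- `T` is closed under extensions. -/
def ClosedUnderExtensions (T : Set C) : Prop :=
  ∀ ⦃A B C' : C⦄ (f : A ⟶ B) (g : B ⟶ C'),
    IsShortExact f g → A ∈ T → C' ∈ T → B ∈ T

/-- `A` is a direct summand of `B`. -/
def IsDirectSummandOf (A B : C) : Prop :=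
  ∃ (s : A ⟶ B) (r : B ⟶ A), s ≫ r = 𝟙 A

end AbelianComplete

section Helpers

variable {C : Type u} [Category.{v} C]

lemma map_self' {l : Ordinal.{w}} (X : Set.Iio l ⥤ C) {a : Set.Iio l} (h : a ≤ a) :
    X.map (homOfLE h) = 𝟙 _ := by
  rw [show homOfLE h = 𝟙 a from rfl, X.map_id]

end Helpers


section TwoStep

variable {C : Type u} [Category.{v} C]

lemma two_eq_succ_one : (2 : Ordinal.{w}) = Order.succ 1 := by
  rw [← Ordinal.add_one_eq_succ, one_add_one_eq_two]

lemma zero_lt_two' : (0 : Ordinal.{w}) < 2 := by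
  rw [two_eq_succ_one]
  exact lt_of_le_of_lt zero_le (Order.lt_succ 1)

lemma one_lt_two' : (1 : Ordinal.{w}) < 2 := by
  rw [two_eq_succ_one]; exact Order.lt_succ 1

lemma le_one_of_lt_two {a : Ordinal.{w}} (h : a < 2) : a ≤ 1 := by
  rw [two_eq_succ_one] at h
  exact Order.lt_succ_iff.mp h

open Classical in
/-- The two-step sequence `A ⟶ B` indexed by `Set.Iio 2`. -/
noncomputable def twoStep {A B : C} (f : A ⟶ B) : Set.Iio (2 : Ordinal.{w}) ⥤ C where
  obj a := if a.1 = 0 then A else B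
  map {a b} h :=
    if ha : a.1 = 0 then
      if hb : b.1 = 0 then eqToHom (by rw [if_pos ha, if_pos hb])
      else eqToHom (if_pos ha) ≫ f ≫ eqToHom (if_neg hb).symm
    else
      eqToHom (by
        have hab : a.1 ≤ b.1 := leOfHom h
        have hb : ¬ b.1 = 0 := fun h0 => ha (nonpos_iff_eq_zero.mp (h0 ▸ hab))
        rw [if_neg ha, if_neg hb])
  map_id a := by
    by_cases ha : a.1 = 0 <;> simp [ha]
  map_comp {a b c} h h' := by
    have hab : a.1 ≤ b.1 := leOfHom h
    have hbc : b.1 ≤ c.1 := leOfHom h'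
    by_cases ha : a.1 = 0 <;> by_cases hb : b.1 = 0 <;> by_cases hc : c.1 = 0 <;>
      simp [ha, hb, hc] <;>
      first
        | rfl
        | (exact absurd (nonpos_iff_eq_zero.mp (hc ▸ hbc)) hb)
        | (exact absurd (nonpos_iff_eq_zero.mp (hb ▸ hab)) ha)

open Classical in
lemma twoStep_map₀₁ {A B : C} (f : A ⟶ B) {x y : Set.Iio (2 : Ordinal.{w})}
    (h : x ⟶ y) (hx : x.1 = 0) (hy : ¬ y.1 = 0) :
    (twoStep f).map h = eqToHom (if_pos hx) ≫ f ≫ eqToHom (if_neg hy).symm := by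
  dsimp [twoStep]
  rw [dif_pos hx, dif_neg hy]

/-- Every morphism satisfying `P` is a two-step transfinite composition. -/
lemma prop_comp_eqToHom (P : MorphismProperty C) {A B A' B' : C} (f : A ⟶ B) (hf : P f)
    (e₁ : A' = A) (e₂ : B = B') : P (eqToHom e₁ ≫ f ≫ eqToHom e₂) := by
  subst e₁; subst e₂; simpa using hf

/-- Every morphism satisfying `P` is a two-step transfinite composition. -/
lemma exists_twoStep (P : MorphismProperty C) {A B : C} (f : A ⟶ B) (hf : P f) :
    ∃ (l : Ordinal.{w}) (hl : 0 < l) (X : Set.Iio l ⥤ C),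
      IsLambdaSequence X ∧ SuccMapsIn P X ∧
        ∃ (c : Cocone X) (_ : IsColimit c) (e₀ : A ≅ X.obj ⟨0, hl⟩) (e₁ : c.pt ≅ B),
          f = e₀.hom ≫ c.ι.app ⟨0, hl⟩ ≫ e₁.hom := by
  classical
  refine ⟨2, zero_lt_two', twoStep f, ?_, ?_, ?_⟩
  · intro g hg hglim
    exfalso
    have h0 : 0 < g := hglim.bot_lt
    have h1 : Order.succ (0 : Ordinal) < g := hglim.succ_lt h0
    have h2 : Order.succ (Order.succ (0 : Ordinal)) < g := hglim.succ_lt h1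
    have : Order.succ (Order.succ (0 : Ordinal)) = 2 := by
      rw [two_eq_succ_one, Ordinal.succ_zero]
    rw [this] at h2
    exact absurd hg (lt_asymm h2)
  · intro a ha
    have ha0 : a = 0 := by
      rw [Ordinal.add_one_eq_succ, two_eq_succ_one] at ha
      have := Order.succ_lt_succ_iff.mp ha
      exact Ordinal.lt_one_iff_zero.mp this
    subst ha0
    rw [twoStep_map₀₁ f (toSucc 0 ha) rfl
      (by simp only [zero_add]; exact one_ne_zero)]
    exact prop_comp_eqToHom P f hf _ _
  · have h1 : (1 : Ordinal.{w}) < 2 := one_lt_two'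
    have le1 : ∀ a : Set.Iio (2 : Ordinal.{w}), a ≤ (⟨1, h1⟩ : Set.Iio (2:Ordinal)) :=
      fun a => le_one_of_lt_two a.2
    refine ⟨⟨(twoStep f).obj ⟨1, h1⟩,
      { app := fun a => (twoStep f).map (homOfLE (le1 a))
        naturality := fun a b h => by
          dsimp
          rw [Category.comp_id, ← Functor.map_comp]
          congr 1 }⟩, ?_, ?_, ?_, ?_⟩
    · exact
      { desc := fun t => t.ι.app ⟨1, h1⟩
        fac := fun t a => t.w (homOfLE (le1 a))
        uniq := fun t m hm => by
          have := hm ⟨1, h1⟩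
          dsimp at this
          rwa [CategoryTheory.Functor.map_id, Category.id_comp] at this }
    · exact eqToIso (if_pos rfl).symm
    · exact eqToIso (if_neg one_ne_zero)
    · dsimp
      rw [twoStep_map₀₁ f _ rfl one_ne_zero]
      have key : ∀ {A' B' : C} (p : A = A') (q : A' = A) (r : B = B') (s' : B' = B),
          f = eqToHom p ≫ (eqToHom q ≫ f ≫ eqToHom r) ≫ eqToHom s' := by
        intro A' B' p q r s'
        subst p; subst r; simp
      exact key (if_pos rfl).symm _ _ (if_neg one_ne_zero)

end TwoStep


section PushoutLemmas

open ZeroObject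

variable {C : Type u} [Category.{v} C] [Abelian C]

lemma mono_of_isPushout {A B X Y : C} {d : A ⟶ B} {g : A ⟶ X} {h : B ⟶ Y} {f : X ⟶ Y}
    (sq : IsPushout d g h f) (hd : Mono d) : Mono f := by
  haveI := hd
  rw [show f = pushout.inr d g ≫ sq.isoPushout.inv from (sq.inr_isoPushout_inv).symm]
  exact mono_comp _ _

noncomputable def cokernelIsoOfPushout {A B X Y : C} {d : A ⟶ B} {g : A ⟶ X} {h : B ⟶ Y}
    {f : X ⟶ Y} (sq : IsPushout d g h f) : cokernel f ≅ cokernel d := by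
  have hu : d ≫ h ≫ cokernel.π f = 0 := by
    rw [← Category.assoc, sq.w, Category.assoc, cokernel.condition, comp_zero]
  refine
    { hom := cokernel.desc f (sq.desc (cokernel.π d) 0 (by simp)) (sq.inr_desc _ _ _)
      inv := cokernel.desc d (h ≫ cokernel.π f) hu
      hom_inv_id := ?_
      inv_hom_id := ?_ }
  · apply coequalizer.hom_ext
    simp only [cokernel.π_desc_assoc, Category.comp_id]
    apply sq.hom_ext
    · rw [sq.inl_desc_assoc, cokernel.π_desc]
    · rw [sq.inr_desc_assoc, zero_comp, cokernel.condition]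
  · apply coequalizer.hom_ext
    simp only [cokernel.π_desc_assoc, Category.assoc, cokernel.π_desc, Category.comp_id]
    rw [sq.inl_desc]

lemma mono_zero_from_zero {W : C} : Mono (0 : (0 : C) ⟶ W) :=
  ⟨fun g h _ => (isZero_zero C).eq_of_tgt g h⟩

lemma isPushout_zero_cokernel {X Y W : C} (i : X ⟶ Y) (e : cokernel i ≅ W) :
    IsPushout i (0 : X ⟶ (0 : C)) (cokernel.π i ≫ e.hom) (0 : (0 : C) ⟶ W) := by
  have comm : CommSq i (0 : X ⟶ (0 : C)) (cokernel.π i ≫ e.hom) (0 : (0 : C) ⟶ W) :=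
    ⟨by rw [← Category.assoc, cokernel.condition, zero_comp, zero_comp]⟩
  refine IsPushout.of_isColimit' comm (PushoutCocone.IsColimit.mk _
    (fun s => e.inv ≫ cokernel.desc i s.inl
      (by rw [s.condition, zero_comp]))
    (fun s => ?_) (fun s => (isZero_zero C).eq_of_src _ _) (fun s m hm₁ hm₂ => ?_))
  · rw [Category.assoc, e.hom_inv_id_assoc, cokernel.π_desc]
  · haveI : Epi (cokernel.π i ≫ e.hom) := epi_comp _ _
    rw [← cancel_epi (cokernel.π i ≫ e.hom), hm₁, Category.assoc, e.hom_inv_id_assoc,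
      cokernel.π_desc]

end PushoutLemmas


section SuccStep

open CategoryTheory.Abelian
open scoped Pseudoelement

variable {C : Type u} [Category.{v} C] [Abelian C]

lemma succStep {Y E A B : C} (ι : Y ⟶ E) (p : E ⟶ B) (hse : IsShortExact ι p)
    (j : A ⟶ B) (hj : Mono j) (t : A ⟶ E) (ht : t ≫ p = j)
    (hext : Ext1Zero (cokernel j) Y) :
    ∃ u : B ⟶ E, u ≫ p = 𝟙 B ∧ j ≫ u = t := by
  obtain ⟨w, hS⟩ := hse
  haveI := hS.mono_f
  haveI := hS.epi_g
  haveI := hj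
  have htp : t ≫ p ≫ cokernel.π j = 0 := by
    rw [← Category.assoc, ht, cokernel.condition]
  set π := cokernel.π t with hπdef
  set δ := cokernel.desc t (p ≫ cokernel.π j) htp with hδdef
  have hπδ : π ≫ δ = p ≫ cokernel.π j := cokernel.π_desc _ _ _
  set f' := ι ≫ π with hf'def
  have hw' : f' ≫ δ = 0 := by
    rw [hf'def, Category.assoc, hπδ, ← Category.assoc, w, zero_comp]
  have hexact_tπ : (ShortComplex.mk t π (cokernel.condition t)).Exact :=
    ShortComplex.exact_of_g_is_cokernel _ (cokernelIsCokernel t)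
  have hexact_j : (ShortComplex.mk j (cokernel.π j) (cokernel.condition j)).Exact :=
    ShortComplex.exact_of_g_is_cokernel _ (cokernelIsCokernel j)
  have hmono_f' : Mono f' := by
    apply Pseudoelement.mono_of_zero_of_map_zero
    intro x hx
    have hx' : (π : E ⟶ cokernel t) ((ι : Y ⟶ E) x) = 0 := by
      rw [← Pseudoelement.comp_apply]
      exact hx
    obtain ⟨y, hy⟩ := Pseudoelement.pseudo_exact_of_exact hexact_tπ _ hx'
    have hjy : (j : A ⟶ B) y = 0 := by
      rw [← ht, Pseudoelement.comp_apply]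
      show (p : E ⟶ B) ((t : A ⟶ E) y) = 0
      rw [hy, ← Pseudoelement.comp_apply, w, Pseudoelement.zero_apply]
    have hy0 : y = 0 := by
      apply Pseudoelement.pseudo_injective_of_mono j
      rw [hjy, Pseudoelement.apply_zero]
    rw [hy0, Pseudoelement.apply_zero] at hy
    apply Pseudoelement.pseudo_injective_of_mono ι
    rw [← hy, Pseudoelement.apply_zero]
  have hepi_δ : Epi δ := by
    apply Pseudoelement.epi_of_pseudo_surjective
    intro z
    obtain ⟨b, hb⟩ := Pseudoelement.pseudo_surjective_of_epi (cokernel.π j) z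
    obtain ⟨e, he⟩ := Pseudoelement.pseudo_surjective_of_epi p b
    refine ⟨(π : E ⟶ cokernel t) e, ?_⟩
    rw [← Pseudoelement.comp_apply, hπδ, Pseudoelement.comp_apply, he, hb]
  have hexact' : (ShortComplex.mk f' δ hw').Exact := by
    apply Pseudoelement.exact_of_pseudo_exact
    intro z hz
    obtain ⟨e, he⟩ := Pseudoelement.pseudo_surjective_of_epi π z
    have h1 : (cokernel.π j : B ⟶ cokernel j) ((p : E ⟶ B) e) = 0 := by
      rw [← Pseudoelement.comp_apply, ← hπδ, Pseudoelement.comp_apply, he]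
      exact hz
    obtain ⟨y, hy⟩ := Pseudoelement.pseudo_exact_of_exact hexact_j _ h1
    have h2 : (p : E ⟶ B) e = (p : E ⟶ B) ((t : A ⟶ E) y) := by
      rw [← Pseudoelement.comp_apply, ht, hy]
    obtain ⟨d, hd0, hdg⟩ := Pseudoelement.sub_of_eq_image p e ((t : A ⟶ E) y) h2
    have hπty : (π : E ⟶ cokernel t) ((t : A ⟶ E) y) = 0 := by
      rw [← Pseudoelement.comp_apply, cokernel.condition, Pseudoelement.zero_apply]
    have hπd : (π : E ⟶ cokernel t) d = (π : E ⟶ cokernel t) e :=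
      hdg _ (π : E ⟶ cokernel t) hπty
    obtain ⟨x₀, hx₀⟩ := Pseudoelement.pseudo_exact_of_exact hS.exact _ hd0
    have hx₀' : Pseudoelement.pseudoApply ι x₀ = d := hx₀
    refine ⟨x₀, ?_⟩
    show Pseudoelement.pseudoApply (ι ≫ π) x₀ = z
    rw [Pseudoelement.comp_apply, hx₀', hπd, he]
  have hS' : (ShortComplex.mk f' δ hw').ShortExact := by
    haveI := hmono_f'
    haveI := hepi_δ
    exact ShortComplex.ShortExact.mk' hexact' hmono_f' hepi_δ
  obtain ⟨σ, hσ⟩ := hext f' δ ⟨hw', hS'⟩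
  have hεδ : (𝟙 (cokernel t) - δ ≫ σ) ≫ δ = 0 := by
    rw [Preadditive.sub_comp, Category.id_comp, Category.assoc, hσ, Category.comp_id, sub_self]
  haveI := hmono_f'
  obtain ⟨ρ, hρ⟩ := KernelFork.IsLimit.lift' hexact'.fIsKernel _ hεδ
  simp only [KernelFork.ι_ofι] at hρ
  have hf'ρ : f' ≫ ρ = 𝟙 Y := by
    rw [← cancel_mono f']
    rw [Category.assoc, hρ, Preadditive.comp_sub, Category.comp_id, ← Category.assoc, hw',
      zero_comp, sub_zero, Category.id_comp]
  set k := π ≫ ρ with hkdef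
  have hιk : ι ≫ k = 𝟙 Y := by
    rw [hkdef, ← Category.assoc, ← hf'def, hf'ρ]
  have htk : t ≫ k = 0 := by
    rw [hkdef, ← Category.assoc, cokernel.condition, zero_comp]
  have hιe' : ι ≫ (𝟙 E - k ≫ ι) = 0 := by
    rw [Preadditive.comp_sub, Category.comp_id, ← Category.assoc, hιk, Category.id_comp, sub_self]
  obtain ⟨u, hu⟩ := CokernelCofork.IsColimit.desc' hS.exact.gIsCokernel _ hιe'
  refine ⟨u, ?_, ?_⟩
  · rw [← cancel_epi p, ← Category.assoc]
    dsimp at hu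
    rw [hu, Preadditive.sub_comp, Category.id_comp, Category.assoc, w, comp_zero, sub_zero,
      Category.comp_id]
  · dsimp at hu
    rw [← ht, Category.assoc, hu, Preadditive.comp_sub, Category.comp_id, ← Category.assoc, htk,
      zero_comp, sub_zero]

end SuccStep


section EklofCore

variable {C : Type u} [Category.{v} C] [Abelian C]
variable {Y E B : C} {l : Ordinal.{w}} {X : Set.Iio l ⥤ C}
  (g : E ⟶ B) (c : Cocone X) (e : c.pt ≅ B)

/-- The pullback of the extension along the canonical map at stage `a`. -/
noncomputable def stage (a : Set.Iio l) : C := pullback g (c.ι.app a ≫ e.hom)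

noncomputable def stagePr (a : Set.Iio l) : stage g c e a ⟶ X.obj a := pullback.snd _ _

noncomputable def stageQr (a : Set.Iio l) : stage g c e a ⟶ E := pullback.fst _ _

lemma stage_condition (a : Set.Iio l) :
    stageQr g c e a ≫ g = stagePr g c e a ≫ (c.ι.app a ≫ e.hom) := pullback.condition

noncomputable def emap {a b : Set.Iio l} (h : a ≤ b) : stage g c e a ⟶ stage g c e b :=
  pullback.lift (stageQr g c e a) (stagePr g c e a ≫ X.map (homOfLE h)) (by
    rw [stage_condition, ← c.w (homOfLE h)]
    simp only [Category.assoc])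

@[simp] lemma emap_qr {a b : Set.Iio l} (h : a ≤ b) :
    emap g c e h ≫ stageQr g c e b = stageQr g c e a := pullback.lift_fst _ _ _

@[simp] lemma emap_pr {a b : Set.Iio l} (h : a ≤ b) :
    emap g c e h ≫ stagePr g c e b = stagePr g c e a ≫ X.map (homOfLE h) :=
  pullback.lift_snd _ _ _

lemma emap_trans {a b d : Set.Iio l} (h₁ : a ≤ b) (h₂ : b ≤ d) :
    emap g c e h₁ ≫ emap g c e h₂ = emap g c e (h₁.trans h₂) := by
  apply pullback.hom_ext
  · show (emap g c e h₁ ≫ emap g c e h₂) ≫ stageQr g c e d =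
      emap g c e (h₁.trans h₂) ≫ stageQr g c e d
    rw [Category.assoc, emap_qr, emap_qr, emap_qr]
  · show (emap g c e h₁ ≫ emap g c e h₂) ≫ stagePr g c e d =
      emap g c e (h₁.trans h₂) ≫ stagePr g c e d
    rw [Category.assoc, emap_pr, ← Category.assoc, emap_pr, Category.assoc, ← Functor.map_comp,
      homOfLE_comp, emap_pr]

lemma emap_self {a : Set.Iio l} (h : a ≤ a) : emap g c e h = 𝟙 _ := by
  apply pullback.hom_ext
  · show emap g c e h ≫ stageQr g c e a = 𝟙 _ ≫ stageQr g c e a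
    rw [emap_qr, Category.id_comp]
  · show emap g c e h ≫ stagePr g c e a = 𝟙 _ ≫ stagePr g c e a
    rw [emap_pr, map_self', Category.comp_id, Category.id_comp]

variable (f : Y ⟶ E) (w : f ≫ g = 0)

noncomputable def stageIncl (a : Set.Iio l) : Y ⟶ stage g c e a :=
  pullback.lift f 0 (by rw [w, zero_comp])

@[simp] lemma stageIncl_qr (a : Set.Iio l) :
    stageIncl g c e f w a ≫ stageQr g c e a = f := pullback.lift_fst _ _ _

@[simp] lemma stageIncl_pr (a : Set.Iio l) :
    stageIncl g c e f w a ≫ stagePr g c e a = 0 := pullback.lift_snd _ _ _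

lemma stageIncl_emap {a b : Set.Iio l} (h : a ≤ b) :
    stageIncl g c e f w a ≫ emap g c e h = stageIncl g c e f w b := by
  apply pullback.hom_ext
  · show (stageIncl g c e f w a ≫ emap g c e h) ≫ stageQr g c e b =
      stageIncl g c e f w b ≫ stageQr g c e b
    rw [Category.assoc, emap_qr, stageIncl_qr, stageIncl_qr]
  · show (stageIncl g c e f w a ≫ emap g c e h) ≫ stagePr g c e b =
      stageIncl g c e f w b ≫ stagePr g c e b
    rw [Category.assoc, emap_pr, ← Category.assoc, stageIncl_pr, zero_comp, stageIncl_pr]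

lemma stage_shortExact (hS : (ShortComplex.mk f g w).ShortExact) (a : Set.Iio l) :
    IsShortExact (stageIncl g c e f w a) (stagePr g c e a) := by
  haveI := hS.mono_f
  haveI := hS.epi_g
  have w' : stageIncl g c e f w a ≫ stagePr g c e a = 0 := stageIncl_pr g c e f w a
  refine ⟨w', ?_⟩
  haveI hmono : Mono (stageIncl g c e f w a) := by
    have : Mono (stageIncl g c e f w a ≫ stageQr g c e a) := by
      rw [stageIncl_qr]; infer_instance
    exact mono_of_mono _ (stageQr g c e a)
  haveI hepi : Epi (stagePr g c e a) := by
    dsimp [stagePr]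
    haveI : Epi g := hS.epi_g
    exact Abelian.epi_pullback_of_epi_f _ _
  have hlift : ∀ {T : C} (k : T ⟶ stage g c e a), k ≫ stagePr g c e a = 0 →
      ∃ v : T ⟶ Y, v ≫ stageIncl g c e f w a = k := by
    intro T k hk
    have hkg : (k ≫ stageQr g c e a) ≫ g = 0 := by
      rw [Category.assoc, stage_condition, ← Category.assoc, ← Category.assoc, hk, zero_comp,
        zero_comp]
    obtain ⟨v, hv⟩ := KernelFork.IsLimit.lift' hS.exact.fIsKernel _ hkg
    simp only [KernelFork.ι_ofι] at hv
    refine ⟨v, ?_⟩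
    apply pullback.hom_ext
    · show (v ≫ stageIncl g c e f w a) ≫ stageQr g c e a = k ≫ stageQr g c e a
      rw [Category.assoc, stageIncl_qr]
      exact hv
    · show (v ≫ stageIncl g c e f w a) ≫ stagePr g c e a = k ≫ stagePr g c e a
      rw [Category.assoc, stageIncl_pr, comp_zero, hk]
  have hker : IsLimit (KernelFork.ofι (stageIncl g c e f w a) w') := by
    refine KernelFork.IsLimit.ofι _ _ (fun {T} k hk => (hlift k hk).choose)
      (fun {T} k hk => (hlift k hk).choose_spec) ?_
    intro T k hk m hm
    rw [← cancel_mono (stageIncl g c e f w a), hm, (hlift k hk).choose_spec]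
  exact ShortComplex.ShortExact.mk' (ShortComplex.exact_of_f_is_kernel _ hker) hmono hepi

/-- A partial system of compatible sections of the pullback extensions. -/
structure PartialSec where
  D : Set (Set.Iio l)
  lower : IsLowerSet D
  s : ∀ a, a ∈ D → (X.obj a ⟶ stage g c e a)
  sec : ∀ a (ha : a ∈ D), s a ha ≫ stagePr g c e a = 𝟙 _
  compat : ∀ a b (ha : a ∈ D) (hb : b ∈ D) (hab : a ≤ b),
    X.map (homOfLE hab) ≫ s b hb = s a ha ≫ emap g c e hab

instance : Preorder (PartialSec g c e) where
  le P Q := ∃ h : P.D ⊆ Q.D, ∀ a (ha : a ∈ P.D), Q.s a (h ha) = P.s a ha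
  le_refl P := ⟨subset_rfl, fun a ha => rfl⟩
  le_trans P Q R := fun ⟨h1, e1⟩ ⟨h2, e2⟩ =>
    ⟨h1.trans h2, fun a ha => (e2 a (h1 ha)).trans (e1 a ha)⟩

/-- The empty partial section. -/
def PartialSec.empty : PartialSec g c e where
  D := ∅
  lower := fun a b _ hb => absurd hb (Set.notMem_empty _)
  s := fun a ha => absurd ha (Set.notMem_empty _)
  sec := fun a ha => absurd ha (Set.notMem_empty _)
  compat := fun a b ha => absurd ha (Set.notMem_empty _)

lemma PartialSec.chain_bddAbove (ch : Set (PartialSec g c e))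
    (hch : IsChain (· ≤ ·) ch) : BddAbove ch := by
  classical
  have key : ∀ (P Q : PartialSec g c e), P ∈ ch → Q ∈ ch →
      ∀ a (haP : a ∈ P.D) (haQ : a ∈ Q.D), P.s a haP = Q.s a haQ := by
    intro P Q hP hQ a haP haQ
    rcases eq_or_ne P Q with rfl | hne
    · rfl
    rcases hch.total hP hQ with h | h
    · obtain ⟨hsub, hs⟩ := h
      exact (hs a haP).symm
    · obtain ⟨hsub, hs⟩ := h
      exact hs a haQ
  have memD : ∀ {a : Set.Iio l}, a ∈ (⋃ P ∈ ch, P.D) → ∃ P, P ∈ ch ∧ a ∈ P.D := by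
    intro a ha
    rcases Set.mem_iUnion₂.mp ha with ⟨P, hP, haP⟩
    exact ⟨P, hP, haP⟩
  refine ⟨{ D := ⋃ P ∈ ch, P.D
            lower := ?_
            s := fun a ha => (memD ha).choose.s a (memD ha).choose_spec.2
            sec := fun a ha => (memD ha).choose.sec a (memD ha).choose_spec.2
            compat := ?_ }, ?_⟩
  · intro a b hba ha
    obtain ⟨P, hP, haP⟩ := memD ha
    exact Set.mem_iUnion₂.mpr ⟨P, hP, P.lower hba haP⟩
  · intro a b ha hb hab
    have haQ : a ∈ (memD hb).choose.D := (memD hb).choose.lower hab (memD hb).choose_spec.2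
    rw [(memD hb).choose.compat a b haQ (memD hb).choose_spec.2 hab,
      key (memD hb).choose (memD ha).choose (memD hb).choose_spec.1 (memD ha).choose_spec.1 a
        haQ (memD ha).choose_spec.2]
  · intro P hP
    have hsub : P.D ⊆ ⋃ Q ∈ ch, Q.D := fun a haP => Set.mem_iUnion₂.mpr ⟨P, hP, haP⟩
    refine ⟨hsub, ?_⟩
    intro a haP
    exact key (memD (hsub haP)).choose P (memD (hsub haP)).choose_spec.1 hP a
      (memD (hsub haP)).choose_spec.2 haP

/-- Extending a maximal-below partial section by one stage. -/
lemma PartialSec.extend (m : PartialSec g c e) (a₀ : Set.Iio l) (ha₀ : a₀ ∉ m.D)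
    (hD : ∀ b : Set.Iio l, b < a₀ → b ∈ m.D)
    (u : X.obj a₀ ⟶ stage g c e a₀) (hu1 : u ≫ stagePr g c e a₀ = 𝟙 _)
    (hu2 : ∀ b (hb : b ∈ m.D) (hba : b ≤ a₀),
      X.map (homOfLE hba) ≫ u = m.s b hb ≫ emap g c e hba) :
    ∃ m' : PartialSec g c e, m ≤ m' ∧ a₀ ∈ m'.D := by
  classical
  have hDiff : ∀ b : Set.Iio l, b ∈ m.D → b < a₀ := by
    intro b hb
    by_contra hcon
    exact ha₀ (m.lower (not_lt.mp hcon) hb)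
  have eqa₀ : ∀ {a : Set.Iio l}, a ∈ insert a₀ m.D → a ∉ m.D → a = a₀ := by
    intro a ha hna
    rcases Set.mem_insert_iff.mp ha with h | h
    · exact h
    · exact absurd h hna
  refine ⟨{ D := insert a₀ m.D
            lower := ?_
            s := fun a ha =>
              if h : a ∈ m.D then m.s a h
              else X.map (homOfLE (le_of_eq (eqa₀ ha h))) ≫ u ≫
                emap g c e (le_of_eq (eqa₀ ha h).symm)
            sec := ?_
            compat := ?_ }, ⟨Set.subset_insert _ _, ?_⟩, Set.mem_insert _ _⟩
  · intro a b hba ha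
    rcases Set.mem_insert_iff.mp ha with h | h
    · rcases lt_or_eq_of_le (h ▸ hba : b ≤ a₀) with h' | h'
      · exact Set.mem_insert_of_mem _ (hD b h')
      · subst h'
        exact Set.mem_insert _ _
    · exact Set.mem_insert_of_mem _ (m.lower hba h)
  · intro a ha
    by_cases h : a ∈ m.D
    · rw [dif_pos h]
      exact m.sec a h
    · rw [dif_neg h]
      obtain rfl := eqa₀ ha h
      rw [map_self', emap_self, Category.id_comp, Category.comp_id]
      exact hu1
  · intro a b ha hb hab
    by_cases hma : a ∈ m.D
    · by_cases hmb : b ∈ m.D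
      · rw [dif_pos hma, dif_pos hmb]
        exact m.compat a b hma hmb hab
      · rw [dif_pos hma, dif_neg hmb]
        obtain rfl := eqa₀ hb hmb
        simp only [map_self', emap_self, Category.id_comp, Category.comp_id]
        exact hu2 a hma hab
    · obtain rfl := eqa₀ ha hma
      have hmb : b ∉ m.D := fun h => absurd (lt_of_le_of_lt hab (hDiff _ h)) (lt_irrefl _)
      obtain rfl := eqa₀ hb hmb
      rw [dif_neg hma]
      simp only [map_self', emap_self, Category.id_comp, Category.comp_id]
  · intro a ha
    dsimp only
    rw [dif_pos ha]

end EklofCore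


section EklofMain

variable {C : Type u} [Category.{v} C] [Abelian C]

theorem eklof {Y : C} {l : Ordinal.{w}} (hl : 0 < l) (X : Set.Iio l ⥤ C)
    (hlam : IsLambdaSequence X)
    (hsucc : ∀ a (ha : a + 1 < l), Mono (X.map (toSucc a ha)) ∧
      Ext1Zero (cokernel (X.map (toSucc a ha))) Y)
    (h0 : IsZero (X.obj ⟨0, hl⟩))
    (c : Cocone X) (hc : IsColimit c) : Ext1Zero c.pt Y := by
  intro E f g hfg
  obtain ⟨w, hS⟩ := hfg
  set e : c.pt ≅ c.pt := Iso.refl _ with he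
  obtain ⟨m, hmax⟩ := zorn_le (PartialSec.chain_bddAbove g c e)
  have h019 : ∀ a : Set.Iio l, a ∈ m.D := by
    by_contra hcon
    push_neg at hcon
    obtain ⟨x, hx⟩ := hcon
    set S : Set Ordinal.{w} := {o | ∃ h : o < l, (⟨o, h⟩ : Set.Iio l) ∉ m.D} with hSdef
    have hSne : S.Nonempty := ⟨x.1, x.2, hx⟩
    obtain ⟨ha₀l, ha₀D⟩ := Ordinal.lt_wf.min_mem S hSne
    set a₀ : Ordinal.{w} := Ordinal.lt_wf.min S hSne with ha₀def
    set a₀v : Set.Iio l := ⟨a₀, ha₀l⟩ with ha₀vdef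
    have hD : ∀ b : Set.Iio l, b < a₀v → b ∈ m.D := by
      intro b hb
      by_contra hbD
      exact Ordinal.lt_wf.not_lt_min S (⟨b.2, hbD⟩ : b.1 ∈ S) hb
    have hDiff : ∀ b : Set.Iio l, b ∈ m.D → b < a₀v := by
      intro b hb
      by_contra hcon'
      exact ha₀D (m.lower (not_lt.mp hcon') hb)
    have hu : ∃ u : X.obj a₀v ⟶ stage g c e a₀v, u ≫ stagePr g c e a₀v = 𝟙 _ ∧
        ∀ b (hb : b ∈ m.D) (hba : b ≤ a₀v),
          X.map (homOfLE hba) ≫ u = m.s b hb ≫ emap g c e hba := by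
      rcases Ordinal.zero_or_succ_or_isSuccLimit a₀ with h0' | ⟨b₀, hb₀⟩ | hlim
      · have hveq : a₀v = (⟨0, hl⟩ : Set.Iio l) := Subtype.ext h0'
        have hz : IsZero (X.obj a₀v) := by rw [hveq]; exact h0
        refine ⟨0, hz.eq_of_src _ _, ?_⟩
        intro b hb hba
        exfalso
        have : b = a₀v := le_antisymm hba (by
          show a₀ ≤ b.1
          rw [h0']
          exact zero_le)
        exact ha₀D (this ▸ hb)
      · have ha₀eq : a₀ = b₀ + 1 := by rw [Ordinal.add_one_eq_succ]; exact hb₀.symm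
        have ha₁l : b₀ + 1 < l := ha₀eq ▸ ha₀l
        have hb₀l : b₀ < l := lt_trans (lt_add_one b₀) ha₁l
        set bv : Set.Iio l := ⟨b₀, hb₀l⟩ with hbvdef
        set sv : Set.Iio l := ⟨b₀ + 1, ha₁l⟩ with hsvdef
        have hveq : a₀v = sv := Subtype.ext ha₀eq
        have hbv : bv ∈ m.D := hD bv (by
          show b₀ < a₀
          rw [ha₀eq]
          exact lt_add_one b₀)
        have hbsv : bv ≤ sv := le_of_lt (lt_add_one b₀)
        have hse := stage_shortExact g c e f w hS sv
        have ht : (m.s bv hbv ≫ emap g c e hbsv) ≫ stagePr g c e sv =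
            X.map (toSucc b₀ ha₁l) := by
          rw [Category.assoc, emap_pr, ← Category.assoc, m.sec, Category.id_comp]
          rfl
        obtain ⟨u', hu'1, hu'2⟩ := succStep _ _ hse (X.map (toSucc b₀ ha₁l))
          (hsucc b₀ ha₁l).1 _ ht (hsucc b₀ ha₁l).2
        rw [hveq]
        refine ⟨u', hu'1, ?_⟩
        intro b hb hba
        have hlt : b < sv := hveq ▸ hDiff b hb
        have hbbv : b ≤ bv := by
          show b.1 ≤ b₀
          have : b.1 < b₀ + 1 := hlt
          rwa [Ordinal.add_one_eq_succ, Order.lt_succ_iff] at this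
        calc X.map (homOfLE hba) ≫ u'
            = X.map (homOfLE hbbv ≫ homOfLE hbsv) ≫ u' := by rw [homOfLE_comp]
          _ = X.map (homOfLE hbbv) ≫ X.map (toSucc b₀ ha₁l) ≫ u' := by
              rw [Functor.map_comp, Category.assoc]; rfl
          _ = X.map (homOfLE hbbv) ≫ m.s bv hbv ≫ emap g c e hbsv := by rw [hu'2]
          _ = (X.map (homOfLE hbbv) ≫ m.s bv hbv) ≫ emap g c e hbsv := by
              rw [Category.assoc]
          _ = (m.s b hb ≫ emap g c e hbbv) ≫ emap g c e hbsv := by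
              rw [m.compat b bv hb hbv hbbv]
          _ = m.s b hb ≫ emap g c e hba := by
              rw [Category.assoc, emap_trans]
      · obtain ⟨hco⟩ := hlam a₀ ha₀l hlim
        set K : Cocone (iioFunctor ha₀l.le ⋙ X) :=
          { pt := stage g c e a₀v
            ι :=
              { app := fun b => m.s ⟨b.1, lt_trans b.2 ha₀l⟩ (hD _ b.2) ≫
                  emap g c e (le_of_lt b.2)
                naturality := fun b b' hbb' => by
                  dsimp [iioFunctor, Monotone.functor]
                  rw [Category.comp_id, ← Category.assoc,
                    m.compat ⟨b.1, lt_trans b.2 ha₀l⟩ ⟨b'.1, lt_trans b'.2 ha₀l⟩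
                      (hD _ b.2) (hD _ b'.2) (leOfHom hbb'),
                    Category.assoc, emap_trans] } } with hK
        refine ⟨hco.desc K, ?_, ?_⟩
        · apply hco.hom_ext
          intro b
          erw [← Category.assoc, hco.fac K b]
          show (m.s ⟨b.1, lt_trans b.2 ha₀l⟩ (hD _ b.2) ≫ emap g c e (le_of_lt b.2)) ≫
              stagePr g c e a₀v = X.map (homOfLE (le_of_lt b.2)) ≫ 𝟙 (X.obj a₀v)
          rw [Category.comp_id, Category.assoc, emap_pr, ← Category.assoc, m.sec,
            Category.id_comp]
        · intro b hb hba
          have hlt : b.1 < a₀ := hDiff b hb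
          exact hco.fac K ⟨b.1, hlt⟩
    obtain ⟨u, hu1, hu2⟩ := hu
    obtain ⟨m', hmm', ha₀m'⟩ := PartialSec.extend g c e m a₀v ha₀D hD u hu1
      (fun b hb hba => hu2 b hb hba)
    obtain ⟨hsub, -⟩ := hmax hmm'
    exact ha₀D (hsub ha₀m')
  refine ⟨hc.desc
    { pt := E
      ι :=
        { app := fun a => m.s a (h019 a) ≫ stageQr g c e a
          naturality := fun a b h => by
            dsimp
            rw [Category.comp_id, show h = homOfLE (leOfHom h) from rfl, ← Category.assoc,
              m.compat a b (h019 a) (h019 b) (leOfHom h), Category.assoc, emap_qr] } }, ?_⟩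
  apply hc.hom_ext
  intro a
  rw [← Category.assoc, hc.fac]
  dsimp
  rw [Category.assoc, stage_condition, ← Category.assoc, m.sec, Category.id_comp]
  simp [he]

end EklofMain


section EklofLemmas

open ZeroObject

variable {C : Type u} [Category.{v} C] [Abelian C]

lemma ext1Zero_of_iso {X X' A : C} (e : X ≅ X') (h : Ext1Zero X A) : Ext1Zero X' A := by
  intro E f g hfg
  obtain ⟨w, hse⟩ := hfg
  have w' : f ≫ (g ≫ e.inv) = 0 := by rw [← Category.assoc, w, zero_comp]
  have hse' : (ShortComplex.mk f (g ≫ e.inv) w').ShortExact :=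
    ShortComplex.shortExact_of_iso
      (ShortComplex.isoMk (S₁ := ShortComplex.mk f g w) (Iso.refl _) (Iso.refl _) e.symm
        (by simp) (by simp)) hse
  obtain ⟨s, hs⟩ := h f (g ≫ e.inv) ⟨w', hse'⟩
  refine ⟨e.inv ≫ s, ?_⟩
  have hsg : s ≫ g = e.hom := by
    have := congrArg (· ≫ e.hom) hs
    simpa using this
  simp [hsg]

end EklofLemmas


section CokSmall

open ZeroObject

variable {C : Type u} [Category.{v} C] [Abelian C]

lemma mem_cellObjects_of_cok (I : MorphismProperty C) {W : C} (hW : W ∈ CokObjects I) :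
    W ∈ CellObjects.{w} I := by
  obtain ⟨X', Y', i, hi, ⟨eW⟩⟩ := hW
  have hP : pushouts I (0 : (0 : C) ⟶ W) :=
    ⟨X', Y', i, 0, cokernel.π i ≫ eW.symm.hom, hi, isPushout_zero_cokernel i eW.symm⟩
  exact exists_twoStep (pushouts I) _ hP

lemma isSFiltered_of_cok (I : MorphismProperty C) {W : C} (hW : W ∈ CokObjects I) :
    IsSFiltered.{w} (CokObjects I) W := by
  have hP : monoWithCokerIn (CokObjects I) (0 : (0 : C) ⟶ W) :=
    ⟨mono_zero_from_zero, W, hW, ⟨cokernelZeroIsoTarget⟩⟩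
  obtain ⟨l, hl, X, hlam, hsm, c, hcl, e₀, e₁, -⟩ :=
    exists_twoStep (monoWithCokerIn (CokObjects I)) _ hP
  exact ⟨l, hl, X, hlam, hsm, (isZero_zero C).of_iso e₀.symm, c, hcl, ⟨e₁⟩⟩

end CokSmall

/-- If `I` is a set of monomorphisms of an abelian category admitting
the small object argument, then `(Cok I)^⊥₁ = (Cell(I))^⊥₁ = (Filt-Cok I)^⊥₁`. -/
theorem perp_cok_eq_perp_cell_eq_perp_filt {C : Type u} [Category.{v} C] [Abelian C]
    (I : MorphismProperty C) (hmono : ∀ ⦃X Y : C⦄ (i : X ⟶ Y), I i → Mono i)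
    (hI : AdmitsSmallObjectArgument.{w} I) :
    rightPerp (CokObjects I) = rightPerp (CellObjects.{w} I) ∧
      rightPerp (CokObjects I) = rightPerp {B : C | IsSFiltered.{w} (CokObjects I) B} := by
  constructor
  · apply Set.Subset.antisymm
    · -- (Cok I)^⊥₁ ⊆ (Cell I)^⊥₁, via Eklof's lemma
      intro Y hY A hA
      obtain ⟨l, hl, X, hlam, hsm, c, hcl, e₀, e₁, -⟩ := hA
      have hsucc : ∀ a (ha : a + 1 < l), Mono (X.map (toSucc a ha)) ∧
          Ext1Zero (cokernel (X.map (toSucc a ha))) Y := by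
        intro a ha
        obtain ⟨A', B', d, g', h', hId, hsq⟩ := hsm a ha
        refine ⟨mono_of_isPushout hsq (hmono d hId), hY _ ?_⟩
        exact ⟨A', B', d, hId, ⟨cokernelIsoOfPushout hsq⟩⟩
      have h0 : IsZero (X.obj ⟨0, hl⟩) := (isZero_zero C).of_iso e₀.symm
      exact ext1Zero_of_iso e₁ (eklof hl X hlam hsucc h0 c hcl)
    · -- (Cell I)^⊥₁ ⊆ (Cok I)^⊥₁, since Cok I ⊆ Cell(I)
      intro Y hY W hW
      exact hY W (mem_cellObjects_of_cok I hW)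
  · apply Set.Subset.antisymm
    · -- (Cok I)^⊥₁ ⊆ (Filt-Cok I)^⊥₁, via Eklof's lemma
      intro Y hY B hB
      obtain ⟨l, hl, X, hlam, hsm, hz, c, hcl, ⟨e⟩⟩ := hB
      have hsucc : ∀ a (ha : a + 1 < l), Mono (X.map (toSucc a ha)) ∧
          Ext1Zero (cokernel (X.map (toSucc a ha))) Y := by
        intro a ha
        obtain ⟨hmono', W, hW, ⟨eW⟩⟩ := hsm a ha
        refine ⟨hmono', hY _ ?_⟩
        obtain ⟨X', Y', i, hi, ⟨eWc⟩⟩ := hW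
        exact ⟨X', Y', i, hi, ⟨eW.trans eWc⟩⟩
      exact ext1Zero_of_iso e (eklof hl X hlam hsucc hz c hcl)
    · -- (Filt-Cok I)^⊥₁ ⊆ (Cok I)^⊥₁, since Cok I ⊆ Filt-Cok I
      intro Y hY W hW
      exact hY W (isSFiltered_of_cok I hW)

end CellComplex
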